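/- Let D be a finite nonempty set, v : D → ℝ, and let μ be the standard Gumbel measure on ℝ. Then the expected maximum under the product Gumbel measure satisfies ∫ max_{d ∈ D} (v(d) + ε(d)) d(⊗_{d∈D} μ)(ε) = log(Σ_{d ∈ D} exp(v(d))) + γ, where γ is the Euler–Mascheroni constant. -/

import Mathlib

open MeasureTheory

/-- The standard Gumbel (Type-I extreme value) measure on ℝ: the measure with
density `x ↦ exp (-x - exp (-x))` with respect to Lebesgue measure. -/
noncomputable def gumbelMeasure : Measure ℝ :=
  MeasureTheory.volume.withDensity
    (fun x => ENNReal.ofReal (Real.exp (-x - Real.exp (-x))))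

open Real Set
open scoped ENNReal NNReal

noncomputable def gumbelDensity (x : ℝ) : ℝ := Real.exp (-x - Real.exp (-x))

lemma gumbel_hasDerivAt (x : ℝ) :
    HasDerivAt (fun y => Real.exp (-Real.exp (-y))) (gumbelDensity x) x := by
  have h1 : HasDerivAt (fun y : ℝ => -Real.exp (-y)) (Real.exp (-x)) x := by
    simpa [Function.comp_def] using ((Real.hasDerivAt_exp (-x)).comp x (hasDerivAt_neg x)).fun_neg
  have := h1.exp
  convert this using 1
  rw [gumbelDensity, Real.exp_sub, Real.exp_neg (Real.exp (-x)), div_eq_mul_inv, mul_comm]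

lemma gumbelDensity_nonneg (x : ℝ) : 0 ≤ gumbelDensity x := (Real.exp_pos _).le

lemma gumbelDensity_cont : Continuous gumbelDensity := by
  unfold gumbelDensity; fun_prop

lemma gumbelDensity_le (x : ℝ) : gumbelDensity x ≤ Real.exp (-x) := by
  rw [gumbelDensity, Real.exp_sub]
  have h1 : (1:ℝ) ≤ Real.exp (Real.exp (-x)) := by
    simpa using Real.exp_le_exp.2 (Real.exp_pos (-x)).le
  calc Real.exp (-x) / Real.exp (Real.exp (-x)) ≤ Real.exp (-x) / 1 := by
        apply div_le_div_of_nonneg_left (Real.exp_pos _).le one_pos h1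
    _ = Real.exp (-x) := by ring

lemma expNeg_hasDerivWithinAt (s : Set ℝ) (x : ℝ) (hx : x ∈ s) :
    HasDerivWithinAt (fun y : ℝ => Real.exp (-y)) (-Real.exp (-x)) s x := by
  simpa [Function.comp_def] using (((Real.hasDerivAt_exp (-x)).comp x (hasDerivAt_neg x))).hasDerivWithinAt

lemma expNeg_injOn (s : Set ℝ) : Set.InjOn (fun y : ℝ => Real.exp (-y)) s := by
  intro x _ y _ h
  have := Real.exp_injective h
  linarith [neg_injective this]

lemma expNeg_image_Iic (a : ℝ) :
    (fun y : ℝ => Real.exp (-y)) '' (Iic a) = Ici (Real.exp (-a)) := by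
  ext t
  simp only [mem_image, mem_Iic, mem_Ici]
  constructor
  · rintro ⟨x, hx, rfl⟩
    exact Real.exp_le_exp.2 (by linarith)
  · intro ht
    have ht0 : 0 < t := lt_of_lt_of_le (Real.exp_pos _) ht
    refine ⟨-Real.log t, ?_, by rw [neg_neg, Real.exp_log ht0]⟩
    have : -a ≤ Real.log t := (Real.le_log_iff_exp_le ht0).2 ht
    linarith

lemma expNeg_image_univ :
    (fun y : ℝ => Real.exp (-y)) '' (univ : Set ℝ) = Ioi 0 := by
  ext t
  simp only [image_univ, mem_range, mem_Ioi]
  constructor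
  · rintro ⟨x, rfl⟩; exact Real.exp_pos _
  · intro ht; exact ⟨-Real.log t, by rw [neg_neg, Real.exp_log ht]⟩

lemma gumbel_subst (s : Set ℝ) (hs : MeasurableSet s) (g : ℝ → ℝ) :
    ∫ t in (fun y : ℝ => Real.exp (-y)) '' s, g t
      = ∫ x in s, Real.exp (-x) * g (Real.exp (-x)) := by
  rw [integral_image_eq_integral_abs_deriv_smul hs (expNeg_hasDerivWithinAt s)
    (expNeg_injOn s)]
  simp [abs_of_pos (Real.exp_pos _)]

lemma gumbel_subst_integrable (s : Set ℝ) (hs : MeasurableSet s) (g : ℝ → ℝ)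
    (h : IntegrableOn g ((fun y : ℝ => Real.exp (-y)) '' s)) :
    IntegrableOn (fun x => Real.exp (-x) * g (Real.exp (-x))) s := by
  rw [integrableOn_image_iff_integrableOn_abs_deriv_smul hs (expNeg_hasDerivWithinAt s)
    (expNeg_injOn s)] at h
  simpa [abs_of_pos (Real.exp_pos _)] using h

lemma integrableOn_gumbelDensity_Iic (a : ℝ) : IntegrableOn gumbelDensity (Iic a) := by
  have h : IntegrableOn (fun t : ℝ => Real.exp (-t)) (Ici (Real.exp (-a))) := by
    have h1 := exp_neg_integrableOn_Ioi (Real.exp (-a) - 1) (b := 1) one_pos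
    have h2 : IntegrableOn (fun t : ℝ => Real.exp (-t)) (Ioi (Real.exp (-a) - 1)) := by
      simpa using h1
    apply h2.mono_set
    intro t ht
    simp only [mem_Ici] at ht
    simp only [mem_Ioi]
    linarith
  have := gumbel_subst_integrable (Iic a) measurableSet_Iic (fun t => Real.exp (-t))
    (by rwa [expNeg_image_Iic])
  apply this.congr_fun _ measurableSet_Iic
  intro x _
  show Real.exp (-x) * Real.exp (-Real.exp (-x)) = gumbelDensity x
  rw [gumbelDensity, ← Real.exp_add]
  ring_nf

lemma integral_gumbelDensity_Iic (a : ℝ) :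
    ∫ x in Iic a, gumbelDensity x = Real.exp (-Real.exp (-a)) := by
  have := integral_Iic_of_hasDerivAt_of_tendsto' (f := fun y => Real.exp (-Real.exp (-y)))
    (f' := gumbelDensity) (a := a) (m := 0)
    (fun x _ => gumbel_hasDerivAt x) (integrableOn_gumbelDensity_Iic a) ?_
  · simpa using this
  · have h1 : Filter.Tendsto (fun y : ℝ => -Real.exp (-y)) Filter.atBot Filter.atBot := by
      have := Real.tendsto_exp_atTop.comp (Filter.tendsto_neg_atBot_atTop (G := ℝ))
      exact Filter.tendsto_neg_atTop_atBot.comp this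
    exact Real.tendsto_exp_atBot.comp h1


lemma gumbelMeasure_Iic (a : ℝ) :
    gumbelMeasure (Iic a) = ENNReal.ofReal (Real.exp (-Real.exp (-a))) := by
  rw [gumbelMeasure, withDensity_apply _ measurableSet_Iic]
  have : ∀ x : ℝ, ENNReal.ofReal (Real.exp (-x - Real.exp (-x)))
      = ENNReal.ofReal (gumbelDensity x) := fun x => rfl
  simp_rw [this]
  rw [← ofReal_integral_eq_lintegral_ofReal (integrableOn_gumbelDensity_Iic a)
      (Filter.Eventually.of_forall fun x => gumbelDensity_nonneg x),
    integral_gumbelDensity_Iic]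

instance : IsProbabilityMeasure gumbelMeasure := by
  constructor
  have h1 : Filter.Tendsto (fun a : ℝ => gumbelMeasure (Iic a)) Filter.atTop
      (nhds (gumbelMeasure univ)) := tendsto_measure_Iic_atTop _
  have h2 : Filter.Tendsto (fun a : ℝ => gumbelMeasure (Iic a)) Filter.atTop (nhds 1) := by
    simp only [gumbelMeasure_Iic]
    have : Filter.Tendsto (fun a : ℝ => Real.exp (-Real.exp (-a))) Filter.atTop (nhds 1) := by
      have hb : Filter.Tendsto (fun a : ℝ => -Real.exp (-a)) Filter.atTop (nhds 0) := by
        simpa using (Real.tendsto_exp_atBot.comp (Filter.tendsto_neg_atTop_atBot)).neg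
      simpa [Function.comp_def] using (Real.continuous_exp.tendsto 0).comp hb
    have := (ENNReal.continuous_ofReal.tendsto 1).comp this
    simpa [Function.comp_def] using this
  exact tendsto_nhds_unique h1 h2

lemma gammaIntegral_aux :
    MellinConvergent (fun t => Real.log t • (fun x : ℝ => ((Real.exp (-x) : ℝ) : ℂ)) t) 1 ∧
      HasDerivAt Complex.GammaIntegral
        (mellin (fun t => Real.log t • (fun x : ℝ => ((Real.exp (-x) : ℝ) : ℂ)) t) 1) 1 := by
  rw [Complex.GammaIntegral_eq_mellin]
  refine mellin_hasDerivAt_of_isBigO_rpow (E := ℂ) (a := 2) (b := 0) ?_ ?_ (by norm_num) ?_ (by norm_num)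
  · refine (Continuous.continuousOn ?_).locallyIntegrableOn measurableSet_Ioi
    exact Complex.continuous_ofReal.comp (Real.continuous_exp.comp continuous_neg)
  · rw [← Asymptotics.isBigO_norm_left]
    simp_rw [Complex.norm_real, Asymptotics.isBigO_norm_left]
    simpa only [neg_one_mul] using (isLittleO_exp_neg_mul_rpow_atTop zero_lt_one _).isBigO
  · simp_rw [neg_zero, Real.rpow_zero]
    refine Asymptotics.isBigO_const_of_tendsto (?_ : Filter.Tendsto _ _ (nhds (1 : ℂ))) one_ne_zero
    rw [(by simp : (1 : ℂ) = Real.exp (-0))]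
    exact (Complex.continuous_ofReal.comp (Real.continuous_exp.comp continuous_neg)).continuousWithinAt

lemma integrableOn_log_mul_exp :
    IntegrableOn (fun t : ℝ => Real.log t * Real.exp (-t)) (Ioi (0:ℝ)) := by
  have h := gammaIntegral_aux.1
  rw [MellinConvergent] at h
  have h2 : IntegrableOn (fun t : ℝ => ((Real.log t * Real.exp (-t) : ℝ) : ℂ)) (Ioi (0:ℝ)) := by
    refine h.congr_fun (fun t ht => ?_) measurableSet_Ioi
    simp [Complex.ofReal_mul, Complex.real_smul]
  simpa [← Complex.ofReal_neg, Complex.exp_ofReal_re, IntegrableOn] using h2.re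

lemma integral_log_mul_exp :
    ∫ t in Ioi (0:ℝ), Real.log t * Real.exp (-t) = -Real.eulerMascheroniConstant := by
  have h := gammaIntegral_aux.2
  have hval : (mellin (fun t => Real.log t • (fun x : ℝ => ((Real.exp (-x) : ℝ) : ℂ)) t) 1)
      = ((∫ t in Ioi (0:ℝ), Real.log t * Real.exp (-t) : ℝ) : ℂ) := by
    have hco : ((∫ t in Ioi (0:ℝ), Real.log t * Real.exp (-t) : ℝ) : ℂ)
        = ∫ t in Ioi (0:ℝ), ((Real.log t * Real.exp (-t) : ℝ) : ℂ) :=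
      (integral_ofReal (𝕜 := ℂ)).symm
    rw [mellin, hco]
    refine setIntegral_congr_fun measurableSet_Ioi (fun t ht => ?_)
    simp [Complex.real_smul, Complex.ofReal_mul]
  rw [hval] at h
  -- transfer to Gamma
  have heq : Complex.GammaIntegral =ᶠ[nhds (1:ℂ)] Complex.Gamma := by
    have hopen : IsOpen {s : ℂ | 0 < s.re} := isOpen_lt continuous_const Complex.continuous_re
    filter_upwards [hopen.mem_nhds (by norm_num : (0:ℝ) < (1:ℂ).re)] with s hs
    exact (Complex.Gamma_eq_integral hs).symm
  have h2 : HasDerivAt Complex.Gamma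
      ((∫ t in Ioi (0:ℝ), Real.log t * Real.exp (-t) : ℝ) : ℂ) 1 :=
    h.congr_of_eventuallyEq heq.symm
  have h3 := Complex.hasDerivAt_Gamma_one
  have := h2.unique h3
  exact_mod_cast this

lemma integrable_id_mul_gumbelDensity :
    Integrable (fun x : ℝ => x * gumbelDensity x) := by
  rw [← integrableOn_univ]
  have h : IntegrableOn (fun t : ℝ => -(Real.log t * Real.exp (-t))) (Ioi (0:ℝ)) :=
    integrableOn_log_mul_exp.neg
  have := gumbel_subst_integrable univ MeasurableSet.univ _
    (by rwa [expNeg_image_univ])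
  apply this.congr_fun _ MeasurableSet.univ
  intro x _
  show Real.exp (-x) * -(Real.log (Real.exp (-x)) * Real.exp (-Real.exp (-x))) = x * gumbelDensity x
  rw [Real.log_exp, gumbelDensity, Real.exp_sub, Real.exp_neg (Real.exp (-x)), div_eq_mul_inv]
  ring

lemma integral_id_mul_gumbelDensity :
    ∫ x : ℝ, x * gumbelDensity x = Real.eulerMascheroniConstant := by
  have h := gumbel_subst univ MeasurableSet.univ (fun t => -(Real.log t * Real.exp (-t)))
  rw [expNeg_image_univ] at h
  have h1 : ∫ t in Ioi (0:ℝ), -(Real.log t * Real.exp (-t)) = Real.eulerMascheroniConstant := by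
    rw [integral_neg, integral_log_mul_exp, neg_neg]
  rw [h1] at h
  rw [← setIntegral_univ, h]
  refine setIntegral_congr_fun MeasurableSet.univ (fun x _ => ?_)
  show x * gumbelDensity x = Real.exp (-x) * -(Real.log (Real.exp (-x)) * Real.exp (-Real.exp (-x)))
  rw [Real.log_exp, gumbelDensity, Real.exp_sub, Real.exp_neg (Real.exp (-x)), div_eq_mul_inv]
  ring

lemma gumbel_withDensity_toNNReal :
    gumbelMeasure = MeasureTheory.volume.withDensity
      (fun x => ((gumbelDensity x).toNNReal : ℝ≥0∞)) := by
  rfl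

lemma measurable_gumbelDensity_toNNReal :
    Measurable (fun x => (gumbelDensity x).toNNReal) :=
  measurable_real_toNNReal.comp gumbelDensity_cont.measurable

lemma integrable_id_gumbel : Integrable (fun x : ℝ => x) gumbelMeasure := by
  rw [gumbel_withDensity_toNNReal,
    integrable_withDensity_iff (measurable_gumbelDensity_toNNReal.coe_nnreal_ennreal)
      (Filter.Eventually.of_forall fun x => ENNReal.coe_lt_top)]
  refine integrable_id_mul_gumbelDensity.congr ?_
  refine Filter.Eventually.of_forall fun x => ?_
  simp [Real.coe_toNNReal _ (gumbelDensity_nonneg x)]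

lemma integral_id_gumbel :
    ∫ x : ℝ, x ∂gumbelMeasure = Real.eulerMascheroniConstant := by
  rw [gumbel_withDensity_toNNReal,
    integral_withDensity_eq_integral_smul measurable_gumbelDensity_toNNReal]
  rw [← integral_id_mul_gumbelDensity]
  congr 1
  ext x
  simp [NNReal.smul_def, Real.coe_toNNReal _ (gumbelDensity_nonneg x), mul_comm]

section Max
variable {D : Type*} [Fintype D] [Nonempty D] (v : D → ℝ)

lemma measurable_maxfun :
    Measurable (fun ε : D → ℝ => Finset.univ.sup' Finset.univ_nonempty fun d => v d + ε d) := by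
  have h : Measurable (Finset.univ.sup' (Finset.univ_nonempty (α := D))
      (fun d (ε : D → ℝ) => v d + ε d)) :=
    Finset.measurable_sup' _ (fun d _ => by fun_prop)
  have heq : (Finset.univ.sup' (Finset.univ_nonempty (α := D))
      (fun d (ε : D → ℝ) => v d + ε d))
      = fun ε : D → ℝ => Finset.univ.sup' Finset.univ_nonempty fun d => v d + ε d := by
    ext ε
    exact Finset.sup'_apply _ _ _
  rwa [heq] at h

lemma maxfun_preimage (t : ℝ) :
    (fun ε : D → ℝ => Finset.univ.sup' Finset.univ_nonempty fun d => v d + ε d) ⁻¹' (Iic t)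
      = Set.pi univ (fun d => Iic (t - v d)) := by
  ext ε
  simp only [mem_preimage, mem_Iic, Finset.sup'_le_iff, Finset.mem_univ, forall_true_left,
    mem_pi, mem_univ]
  constructor
  · intro h d; linarith [h d]
  · intro h d; linarith [h d]

lemma map_maxfun_eq :
    Measure.map (fun ε : D → ℝ => Finset.univ.sup' Finset.univ_nonempty fun d => v d + ε d)
        (Measure.pi fun _ : D => gumbelMeasure)
      = Measure.map (· + Real.log (∑ d : D, Real.exp (v d))) gumbelMeasure := by
  set c : ℝ := Real.log (∑ d : D, Real.exp (v d)) with hc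
  have hS : (0:ℝ) < ∑ d : D, Real.exp (v d) :=
    Finset.sum_pos (fun d _ => Real.exp_pos _) Finset.univ_nonempty
  have hec : Real.exp c = ∑ d : D, Real.exp (v d) := Real.exp_log hS
  have h1 : IsProbabilityMeasure
      (Measure.map (fun ε : D → ℝ => Finset.univ.sup' Finset.univ_nonempty fun d => v d + ε d)
        (Measure.pi fun _ : D => gumbelMeasure)) :=
    Measure.isProbabilityMeasure_map (measurable_maxfun v).aemeasurable
  have hmc : Measurable (fun x : ℝ => x + c) := by fun_prop
  refine Measure.ext_of_Iic _ _ (fun t => ?_)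
  rw [Measure.map_apply (measurable_maxfun v) measurableSet_Iic,
    Measure.map_apply hmc measurableSet_Iic,
    maxfun_preimage]
  have hpre : (fun x : ℝ => x + c) ⁻¹' (Iic t) = Iic (t - c) := by
    ext x
    simp only [mem_preimage, mem_Iic]
    constructor <;> (intro h; linarith)
  rw [hpre, Measure.pi_pi, gumbelMeasure_Iic]
  simp_rw [gumbelMeasure_Iic]
  rw [← ENNReal.ofReal_prod_of_nonneg (fun d _ => (Real.exp_pos _).le)]
  congr 1
  rw [← Real.exp_sum]
  congr 1
  have key : Real.exp (-(t - c)) = ∑ d : D, Real.exp (-(t - v d)) := by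
    rw [show -(t - c) = c + -t by ring, Real.exp_add, hec, Finset.sum_mul]
    refine Finset.sum_congr rfl fun d _ => ?_
    rw [← Real.exp_add]
    ring_nf
  rw [key, ← Finset.sum_neg_distrib]

end Max

/-- The expected maximum of `v d + ε d` over a finite nonempty set of alternatives,
where the `ε d` are i.i.d. standard Gumbel, equals the log-sum-exp of `v` plus the
Euler–Mascheroni constant. -/
theorem integral_max_gumbel {D : Type*} [Fintype D] [Nonempty D] (v : D → ℝ) :
    (∫ ε : D → ℝ, (Finset.univ.sup' Finset.univ_nonempty fun d => v d + ε d)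
        ∂(Measure.pi fun _ : D => gumbelMeasure))
      = Real.log (∑ d : D, Real.exp (v d)) + Real.eulerMascheroniConstant := by
  set c : ℝ := Real.log (∑ d : D, Real.exp (v d)) with hc
  have h1 : (∫ ε : D → ℝ, (Finset.univ.sup' Finset.univ_nonempty fun d => v d + ε d)
        ∂(Measure.pi fun _ : D => gumbelMeasure))
      = ∫ x : ℝ, x ∂(Measure.map
          (fun ε : D → ℝ => Finset.univ.sup' Finset.univ_nonempty fun d => v d + ε d)
          (Measure.pi fun _ : D => gumbelMeasure)) :=
    (integral_map (measurable_maxfun v).aemeasurable aestronglyMeasurable_id).symm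
  have hmc : Measurable (fun x : ℝ => x + c) := by fun_prop
  have h2 : ∫ x : ℝ, x ∂(Measure.map (fun x : ℝ => x + c) gumbelMeasure)
      = ∫ x : ℝ, (x + c) ∂gumbelMeasure :=
    integral_map hmc.aemeasurable aestronglyMeasurable_id
  rw [h1, map_maxfun_eq v, ← hc, h2]
  rw [integral_add integrable_id_gumbel (integrable_const c), integral_id_gumbel,
    integral_const]
  simp [add_comm]
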